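/- The Gleeok 5-bit S-box S₅ is a bijection of 𝔽₂⁵; each of the five coordinate Boolean functions of S₅ has algebraic degree at most 2, and each of the five coordinate Boolean functions of its inverse S₅⁻¹ has algebraic degree at most 3. -/

import Mathlib

/-- A Boolean function `f : 𝔽₂ⁿ → 𝔽₂` has algebraic degree at most `d`. -/
def HasAlgDegLE {n : ℕ} (f : (Fin n → ZMod 2) → ZMod 2) (d : ℕ) : Prop :=
  ∃ P : MvPolynomial (Fin n) (ZMod 2),
    P.totalDegree ≤ d ∧ ∀ x, MvPolynomial.eval x P = f x

/-- The integer `Σᵢ xᵢ · 2^(n−1−i)` encoded by a bit vector (big-endian: `x 0` is the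
most significant bit). -/
def vecToNat {n : ℕ} (x : Fin n → ZMod 2) : ℕ :=
  ∑ i, (x i).val * 2 ^ (n - 1 - i.val)

/-- The bit vector (big-endian) of a natural number. -/
def natToVec (n : ℕ) (v : ℕ) : Fin n → ZMod 2 :=
  fun i => ((v >>> (n - 1 - i.val)) % 2 : ℕ)

/-- The Gleeok 5-bit S-box, given by its truth table (in hexadecimal). -/
def S5 (x : Fin 5 → ZMod 2) : Fin 5 → ZMod 2 :=
  natToVec 5 ([0x0, 0x5, 0xa, 0xb, 0x14, 0x11, 0x16, 0x17,
               0x9, 0xc, 0x3, 0x2, 0xd, 0x8, 0xf, 0xe,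
               0x12, 0x15, 0x18, 0x1b, 0x6, 0x1, 0x4, 0x7,
               0x1a, 0x1d, 0x10, 0x13, 0x1e, 0x19, 0x1c, 0x1f].getD (vecToNat x) 0)


open MvPolynomial in
private lemma gleeok_deg1 (i : Fin 5) (d : ℕ) (h : 1 ≤ d) :
    (X i : MvPolynomial (Fin 5) (ZMod 2)).totalDegree ≤ d := by
  simp [MvPolynomial.totalDegree_X]; omega

open MvPolynomial in
private lemma gleeok_deg2 (i j : Fin 5) (d : ℕ) (h : 2 ≤ d) :
    (X i * X j : MvPolynomial (Fin 5) (ZMod 2)).totalDegree ≤ d := by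
  refine le_trans (MvPolynomial.totalDegree_mul _ _) ?_
  have := MvPolynomial.totalDegree_X (R := ZMod 2) i
  have := MvPolynomial.totalDegree_X (R := ZMod 2) j
  omega

open MvPolynomial in
private lemma gleeok_deg3 (i j k : Fin 5) (d : ℕ) (h : 3 ≤ d) :
    (X i * X j * X k : MvPolynomial (Fin 5) (ZMod 2)).totalDegree ≤ d := by
  refine le_trans (MvPolynomial.totalDegree_mul _ _) ?_
  have := MvPolynomial.totalDegree_X (R := ZMod 2) k
  have h2 := gleeok_deg2 i j 2 le_rfl
  omega

private lemma gleeok_degadd (p q : MvPolynomial (Fin 5) (ZMod 2)) (d : ℕ)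
    (hp : p.totalDegree ≤ d) (hq : q.totalDegree ≤ d) : (p + q).totalDegree ≤ d :=
  le_trans (MvPolynomial.totalDegree_add p q) (max_le hp hq)

/-- The inverse truth table of the Gleeok 5-bit S-box. -/
private def S5inv (x : Fin 5 → ZMod 2) : Fin 5 → ZMod 2 :=
  natToVec 5 ([0, 21, 11, 10, 22, 1, 20, 23, 13, 8, 2, 3, 9, 12, 15, 14,
               26, 5, 16, 27, 4, 17, 6, 7, 18, 29, 24, 19, 30, 25, 28, 31].getD (vecToNat x) 0)

private lemma gleeok_zm2 : ∀ a : ZMod 2, a = 0 ∨ a = 1 := by decide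

open MvPolynomial in
set_option maxHeartbeats 4000000 in
/-- The Gleeok 5-bit S-box is a bijection, each of its coordinate Boolean functions has
algebraic degree at most 2, and each coordinate Boolean function of its inverse has
algebraic degree at most 3. -/
theorem S5_bijective_and_degrees :
    Function.Bijective S5 ∧
    (∀ j : Fin 5, HasAlgDegLE (fun x => S5 x j) 2) ∧
    (∀ j : Fin 5, HasAlgDegLE (fun x => Function.invFun S5 x j) 3) := by
  have hli : ∀ x, S5inv (S5 x) = x := by decide
  have hri : ∀ x, S5 (S5inv x) = x := by decide
  have hbij : Function.Bijective S5 :=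
    ⟨Function.LeftInverse.injective hli, Function.RightInverse.surjective hri⟩
  have hinv : Function.invFun S5 = S5inv := by
    funext x
    apply hbij.injective
    rw [Function.invFun_eq (hbij.surjective x), hri x]
  refine ⟨hbij, ?_, ?_⟩
  · intro j
    fin_cases j
    · refine ⟨(X 2 + X 1 * X 2 + X 0 : MvPolynomial (Fin 5) (ZMod 2)), ?_, ?_⟩
      · refine ?_
        repeat' apply gleeok_degadd
        all_goals first
          | exact gleeok_deg1 _ _ (by norm_num)
          | exact gleeok_deg2 _ _ _ (by norm_num)
          | exact gleeok_deg3 _ _ _ _ (by norm_num)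
      · intro x
        simp only [map_add, map_mul, MvPolynomial.eval_X, map_one, S5, vecToNat,
          Fin.sum_univ_five]
        rcases gleeok_zm2 (x 0) with h0|h0 <;> rcases gleeok_zm2 (x 1) with h1|h1 <;>
          rcases gleeok_zm2 (x 2) with h2|h2 <;> rcases gleeok_zm2 (x 3) with h3|h3 <;>
          rcases gleeok_zm2 (x 4) with h4|h4 <;> rw [h0, h1, h2, h3, h4] <;> decide
    · refine ⟨(X 3 + X 2 * X 3 + X 1 : MvPolynomial (Fin 5) (ZMod 2)), ?_, ?_⟩
      · refine ?_
        repeat' apply gleeok_degadd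
        all_goals first
          | exact gleeok_deg1 _ _ (by norm_num)
          | exact gleeok_deg2 _ _ _ (by norm_num)
          | exact gleeok_deg3 _ _ _ _ (by norm_num)
      · intro x
        simp only [map_add, map_mul, MvPolynomial.eval_X, map_one, S5, vecToNat,
          Fin.sum_univ_five]
        rcases gleeok_zm2 (x 0) with h0|h0 <;> rcases gleeok_zm2 (x 1) with h1|h1 <;>
          rcases gleeok_zm2 (x 2) with h2|h2 <;> rcases gleeok_zm2 (x 3) with h3|h3 <;>
          rcases gleeok_zm2 (x 4) with h4|h4 <;> rw [h0, h1, h2, h3, h4] <;> decide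
    · refine ⟨(X 4 + X 3 * X 4 + X 2 : MvPolynomial (Fin 5) (ZMod 2)), ?_, ?_⟩
      · refine ?_
        repeat' apply gleeok_degadd
        all_goals first
          | exact gleeok_deg1 _ _ (by norm_num)
          | exact gleeok_deg2 _ _ _ (by norm_num)
          | exact gleeok_deg3 _ _ _ _ (by norm_num)
      · intro x
        simp only [map_add, map_mul, MvPolynomial.eval_X, map_one, S5, vecToNat,
          Fin.sum_univ_five]
        rcases gleeok_zm2 (x 0) with h0|h0 <;> rcases gleeok_zm2 (x 1) with h1|h1 <;>
          rcases gleeok_zm2 (x 2) with h2|h2 <;> rcases gleeok_zm2 (x 3) with h3|h3 <;>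
          rcases gleeok_zm2 (x 4) with h4|h4 <;> rw [h0, h1, h2, h3, h4] <;> decide
    · refine ⟨(X 3 + X 0 + X 0 * X 4 : MvPolynomial (Fin 5) (ZMod 2)), ?_, ?_⟩
      · refine ?_
        repeat' apply gleeok_degadd
        all_goals first
          | exact gleeok_deg1 _ _ (by norm_num)
          | exact gleeok_deg2 _ _ _ (by norm_num)
          | exact gleeok_deg3 _ _ _ _ (by norm_num)
      · intro x
        simp only [map_add, map_mul, MvPolynomial.eval_X, map_one, S5, vecToNat,
          Fin.sum_univ_five]
        rcases gleeok_zm2 (x 0) with h0|h0 <;> rcases gleeok_zm2 (x 1) with h1|h1 <;>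
          rcases gleeok_zm2 (x 2) with h2|h2 <;> rcases gleeok_zm2 (x 3) with h3|h3 <;>
          rcases gleeok_zm2 (x 4) with h4|h4 <;> rw [h0, h1, h2, h3, h4] <;> decide
    · refine ⟨(X 4 + X 1 + X 0 * X 1 : MvPolynomial (Fin 5) (ZMod 2)), ?_, ?_⟩
      · refine ?_
        repeat' apply gleeok_degadd
        all_goals first
          | exact gleeok_deg1 _ _ (by norm_num)
          | exact gleeok_deg2 _ _ _ (by norm_num)
          | exact gleeok_deg3 _ _ _ _ (by norm_num)
      · intro x
        simp only [map_add, map_mul, MvPolynomial.eval_X, map_one, S5, vecToNat,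
          Fin.sum_univ_five]
        rcases gleeok_zm2 (x 0) with h0|h0 <;> rcases gleeok_zm2 (x 1) with h1|h1 <;>
          rcases gleeok_zm2 (x 2) with h2|h2 <;> rcases gleeok_zm2 (x 3) with h3|h3 <;>
          rcases gleeok_zm2 (x 4) with h4|h4 <;> rw [h0, h1, h2, h3, h4] <;> decide
  · intro j
    fin_cases j
    · refine ⟨(X 4 + X 3 * X 4 + X 2 + X 1 * X 4 + X 1 * X 3 * X 4 + X 1 * X 2 + X 0 : MvPolynomial (Fin 5) (ZMod 2)), ?_, ?_⟩
      · refine ?_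
        repeat' apply gleeok_degadd
        all_goals first
          | exact gleeok_deg1 _ _ (by norm_num)
          | with_reducible exact gleeok_deg2 _ _ _ (by norm_num)
          | exact gleeok_deg3 _ _ _ _ (by norm_num)
      · intro x
        simp only [hinv, S5inv, map_add, map_mul, MvPolynomial.eval_X, map_one, vecToNat,
          Fin.sum_univ_five]
        rcases gleeok_zm2 (x 0) with h0|h0 <;> rcases gleeok_zm2 (x 1) with h1|h1 <;>
          rcases gleeok_zm2 (x 2) with h2|h2 <;> rcases gleeok_zm2 (x 3) with h3|h3 <;>
          rcases gleeok_zm2 (x 4) with h4|h4 <;> rw [h0, h1, h2, h3, h4] <;> decide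
    · refine ⟨(X 3 + X 2 * X 3 + X 1 + X 0 + X 0 * X 4 + X 0 * X 2 + X 0 * X 2 * X 4 : MvPolynomial (Fin 5) (ZMod 2)), ?_, ?_⟩
      · refine ?_
        repeat' apply gleeok_degadd
        all_goals first
          | exact gleeok_deg1 _ _ (by norm_num)
          | with_reducible exact gleeok_deg2 _ _ _ (by norm_num)
          | exact gleeok_deg3 _ _ _ _ (by norm_num)
      · intro x
        simp only [hinv, S5inv, map_add, map_mul, MvPolynomial.eval_X, map_one, vecToNat,
          Fin.sum_univ_five]
        rcases gleeok_zm2 (x 0) with h0|h0 <;> rcases gleeok_zm2 (x 1) with h1|h1 <;>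
          rcases gleeok_zm2 (x 2) with h2|h2 <;> rcases gleeok_zm2 (x 3) with h3|h3 <;>
          rcases gleeok_zm2 (x 4) with h4|h4 <;> rw [h0, h1, h2, h3, h4] <;> decide
    · refine ⟨(X 4 + X 3 * X 4 + X 2 + X 1 + X 1 * X 3 + X 0 * X 1 + X 0 * X 1 * X 3 : MvPolynomial (Fin 5) (ZMod 2)), ?_, ?_⟩
      · refine ?_
        repeat' apply gleeok_degadd
        all_goals first
          | exact gleeok_deg1 _ _ (by norm_num)
          | with_reducible exact gleeok_deg2 _ _ _ (by norm_num)
          | exact gleeok_deg3 _ _ _ _ (by norm_num)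
      · intro x
        simp only [hinv, S5inv, map_add, map_mul, MvPolynomial.eval_X, map_one, vecToNat,
          Fin.sum_univ_five]
        rcases gleeok_zm2 (x 0) with h0|h0 <;> rcases gleeok_zm2 (x 1) with h1|h1 <;>
          rcases gleeok_zm2 (x 2) with h2|h2 <;> rcases gleeok_zm2 (x 3) with h3|h3 <;>
          rcases gleeok_zm2 (x 4) with h4|h4 <;> rw [h0, h1, h2, h3, h4] <;> decide
    · refine ⟨(X 3 + X 2 + X 2 * X 4 + X 1 * X 2 + X 1 * X 2 * X 4 + X 0 + X 0 * X 4 : MvPolynomial (Fin 5) (ZMod 2)), ?_, ?_⟩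
      · refine ?_
        repeat' apply gleeok_degadd
        all_goals first
          | exact gleeok_deg1 _ _ (by norm_num)
          | with_reducible exact gleeok_deg2 _ _ _ (by norm_num)
          | exact gleeok_deg3 _ _ _ _ (by norm_num)
      · intro x
        simp only [hinv, S5inv, map_add, map_mul, MvPolynomial.eval_X, map_one, vecToNat,
          Fin.sum_univ_five]
        rcases gleeok_zm2 (x 0) with h0|h0 <;> rcases gleeok_zm2 (x 1) with h1|h1 <;>
          rcases gleeok_zm2 (x 2) with h2|h2 <;> rcases gleeok_zm2 (x 3) with h3|h3 <;>
          rcases gleeok_zm2 (x 4) with h4|h4 <;> rw [h0, h1, h2, h3, h4] <;> decide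
    · refine ⟨(X 4 + X 3 + X 2 * X 3 + X 1 + X 0 * X 3 + X 0 * X 2 * X 3 + X 0 * X 1 : MvPolynomial (Fin 5) (ZMod 2)), ?_, ?_⟩
      · refine ?_
        repeat' apply gleeok_degadd
        all_goals first
          | exact gleeok_deg1 _ _ (by norm_num)
          | with_reducible exact gleeok_deg2 _ _ _ (by norm_num)
          | exact gleeok_deg3 _ _ _ _ (by norm_num)
      · intro x
        simp only [hinv, S5inv, map_add, map_mul, MvPolynomial.eval_X, map_one, vecToNat,
          Fin.sum_univ_five]
        rcases gleeok_zm2 (x 0) with h0|h0 <;> rcases gleeok_zm2 (x 1) with h1|h1 <;>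
          rcases gleeok_zm2 (x 2) with h2|h2 <;> rcases gleeok_zm2 (x 3) with h3|h3 <;>
          rcases gleeok_zm2 (x 4) with h4|h4 <;> rw [h0, h1, h2, h3, h4] <;> decide
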